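/- arXiv:1511.06661 — 2 statements merged into one kernel-verified Lean document; each statement's English description precedes it below -/
import Mathlib

section
/- Let G₁ and G₂ be finite simple graphs with n₁, n₂ vertices and m₁, m₂ edges respectively. Then F(G₁ + G₂) = F(G₁) + F(G₂) + 3n₂M₁(G₁) + 3n₁M₁(G₂) + 6n₂²m₁ + 6n₁²m₂ + n₁n₂³ + n₂n₁³, where G₁ + G₂ is the join of G₁ and G₂. -/
open Finset

/-- Degree of a vertex: the number of its neighbors. -/
noncomputable def degN {V : Type*} (G : SimpleGraph V) (v : V) : ℕ :=
  Nat.card (G.neighborSet v)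

/-- F-index: the sum of cubes of the vertex degrees. -/
noncomputable def Findex {V : Type*} [Fintype V] (G : SimpleGraph V) : ℕ :=
  ∑ v, (degN G v) ^ 3

/-- First Zagreb index: the sum of squares of the vertex degrees. -/
noncomputable def zagrebM1 {V : Type*} [Fintype V] (G : SimpleGraph V) : ℕ :=
  ∑ v, (degN G v) ^ 2

/-- Number of edges of a graph. -/
noncomputable def numEdges {V : Type*} (G : SimpleGraph V) : ℕ :=
  Nat.card G.edgeSet

/-- Join of two simple graphs: the disjoint union together with all edges
joining a vertex of the first graph to a vertex of the second. -/
def graphJoin {V₁ V₂ : Type*} (G₁ : SimpleGraph V₁) (G₂ : SimpleGraph V₂) :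
    SimpleGraph (V₁ ⊕ V₂) where
  Adj x y :=
    match x, y with
    | .inl a, .inl b => G₁.Adj a b
    | .inr a, .inr b => G₂.Adj a b
    | _, _ => True
  symm := ⟨by rintro (a | a) (b | b) h <;> first | exact h.symm | trivial⟩
  loopless := ⟨by
    rintro (a | a) h
    · exact G₁.loopless.irrefl a h
    · exact G₂.loopless.irrefl a h⟩

open scoped Classical in
lemma degN_eq_degree {V : Type*} [Fintype V] (G : SimpleGraph V) (v : V) :
    degN G v = G.degree v := by
  rw [degN, Nat.card_eq_fintype_card, SimpleGraph.degree, SimpleGraph.neighborFinset,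
    Set.toFinset_card]

open scoped Classical in
lemma handshake {V : Type*} [Fintype V] (G : SimpleGraph V) :
    ∑ v, degN G v = 2 * numEdges G := by
  simp only [degN_eq_degree]
  rw [SimpleGraph.sum_degrees_eq_twice_card_edges, numEdges,
    Nat.card_eq_fintype_card, SimpleGraph.edgeFinset, Set.toFinset_card]

open scoped Classical in
lemma degN_join_inl {V₁ V₂ : Type*} [Fintype V₁] [Fintype V₂] (G₁ : SimpleGraph V₁)
    (G₂ : SimpleGraph V₂) (a : V₁) :
    degN (graphJoin G₁ G₂) (Sum.inl a) = degN G₁ a + Fintype.card V₂ := by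
  rw [degN, degN]
  have e : (graphJoin G₁ G₂).neighborSet (Sum.inl a) ≃
      (G₁.neighborSet a) ⊕ V₂ :=
    (Equiv.subtypeSum (p := fun x => (graphJoin G₁ G₂).Adj (Sum.inl a) x)).trans
      (Equiv.sumCongr (Equiv.refl _) (Equiv.subtypeUnivEquiv fun _ => trivial))
  rw [Nat.card_congr e, Nat.card_sum]
  simp [Nat.card_eq_fintype_card]

open scoped Classical in
lemma degN_join_inr {V₁ V₂ : Type*} [Fintype V₁] [Fintype V₂] (G₁ : SimpleGraph V₁)
    (G₂ : SimpleGraph V₂) (b : V₂) :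
    degN (graphJoin G₁ G₂) (Sum.inr b) = degN G₂ b + Fintype.card V₁ := by
  rw [degN, degN]
  have e : (graphJoin G₁ G₂).neighborSet (Sum.inr b) ≃
      (G₂.neighborSet b) ⊕ V₁ :=
    ((Equiv.subtypeSum (p := fun x => (graphJoin G₁ G₂).Adj (Sum.inr b) x)).trans
      (Equiv.sumCongr (Equiv.subtypeUnivEquiv fun _ => trivial) (Equiv.refl _))).trans
      (Equiv.sumComm _ _)
  rw [Nat.card_congr e, Nat.card_sum]
  simp [Nat.card_eq_fintype_card]

theorem Findex_join {V₁ V₂ : Type*} [Fintype V₁] [Fintype V₂]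
    (G₁ : SimpleGraph V₁) (G₂ : SimpleGraph V₂)
    (n₁ n₂ m₁ m₂ : ℕ) (hn₁ : Fintype.card V₁ = n₁) (hn₂ : Fintype.card V₂ = n₂)
    (hm₁ : numEdges G₁ = m₁) (hm₂ : numEdges G₂ = m₂) :
    Findex (graphJoin G₁ G₂) =
      Findex G₁ + Findex G₂ + 3 * n₂ * zagrebM1 G₁ + 3 * n₁ * zagrebM1 G₂
        + 6 * n₂ ^ 2 * m₁ + 6 * n₁ ^ 2 * m₂ + n₁ * n₂ ^ 3 + n₂ * n₁ ^ 3 := by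
  subst hn₁ hn₂ hm₁ hm₂
  have h1 := handshake G₁
  have h2 := handshake G₂
  rw [Findex, Fintype.sum_sum_type]
  simp only [degN_join_inl, degN_join_inr]
  have expand : ∀ (d n : ℕ), (d + n) ^ 3 = d ^ 3 + 3 * n * d ^ 2 + 3 * n ^ 2 * d + n ^ 3 := by
    intro d n; ring
  simp only [expand, Finset.sum_add_distrib, Finset.sum_const, Finset.card_univ,
    ← Finset.mul_sum, smul_eq_mul]
  rw [Findex, Findex, zagrebM1, zagrebM1]
  rw [h1, h2]
  ring
end

section
/- Let G₁, G₂ be finite simple graphs with distinguished vertices v₁ ∈ V(G₁), v₂ ∈ V(G₂). Then the F-index of the splice (G₁ • G₂)(v₁,v₂) equals F(G₁) + F(G₂) + 3d_{G₁}(v₁)d_{G₂}(v₂)(d_{G₁}(v₁) + d_{G₂}(v₂)), and the F-index of the link (G₁ ∼ G₂)(v₁,v₂) equals F(G₁) + F(G₂) + 3(d_{G₁}(v₁) + d_{G₂}(v₂)) + 3(d_{G₁}(v₁)² + d_{G₂}(v₂)²) + 2. -/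
open Finset

/-- Adjacency relation for the splice of two graphs at `v₁` and `v₂`,
where the identified vertex is represented by `Sum.inl v₁`. -/
def spliceAdj {V₁ V₂ : Type*} (G₁ : SimpleGraph V₁) (G₂ : SimpleGraph V₂)
    (v₁ : V₁) (v₂ : V₂) : V₁ ⊕ V₂ → V₁ ⊕ V₂ → Prop
  | .inl a, .inl b => G₁.Adj a b
  | .inr a, .inr b => G₂.Adj a b
  | .inl a, .inr b => a = v₁ ∧ G₂.Adj v₂ b
  | .inr a, .inl b => b = v₁ ∧ G₂.Adj v₂ a

/-- Splice of `G₁` and `G₂` at `v₁`, `v₂`: identify `v₁` and `v₂` in the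
disjoint union.  The vertex `Sum.inr v₂` is removed and `Sum.inl v₁` plays the
role of the identified vertex. -/
def graphSplice {V₁ V₂ : Type*} (G₁ : SimpleGraph V₁) (G₂ : SimpleGraph V₂)
    (v₁ : V₁) (v₂ : V₂) : SimpleGraph {x : V₁ ⊕ V₂ // x ≠ Sum.inr v₂} where
  Adj x y := spliceAdj G₁ G₂ v₁ v₂ x.1 y.1
  symm := by
    constructor
    rintro ⟨(a | a), _⟩ ⟨(b | b), _⟩ h
    · exact h.symm
    · exact h
    · exact h
    · exact h.symm
  loopless := by
    constructor
    rintro ⟨(a | a), _⟩ h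
    · exact G₁.loopless.irrefl a h
    · exact G₂.loopless.irrefl a h

/-- Link of `G₁` and `G₂` at `v₁`, `v₂`: the disjoint union together with the
single edge joining `v₁` and `v₂`. -/
def graphLink {V₁ V₂ : Type*} (G₁ : SimpleGraph V₁) (G₂ : SimpleGraph V₂)
    (v₁ : V₁) (v₂ : V₂) : SimpleGraph (V₁ ⊕ V₂) where
  Adj x y :=
    match x, y with
    | .inl a, .inl b => G₁.Adj a b
    | .inr a, .inr b => G₂.Adj a b
    | .inl a, .inr b => a = v₁ ∧ b = v₂
    | .inr a, .inl b => b = v₁ ∧ a = v₂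
  symm := by
    constructor
    rintro (a | a) (b | b) h
    · exact h.symm
    · exact h
    · exact h
    · exact h.symm
  loopless := by
    constructor
    rintro (a | a) h
    · exact G₁.loopless.irrefl a h
    · exact G₂.loopless.irrefl a h

/-! ### Auxiliary lemmas -/

lemma degN_eq_ncard {V : Type*} (G : SimpleGraph V) (v : V) :
    degN G v = (G.neighborSet v).ncard := Nat.card_coe_set_eq _

set_option linter.unusedSectionVars false

section Aux

variable {V₁ V₂ : Type*} [Fintype V₁] [Fintype V₂] [DecidableEq V₁] [DecidableEq V₂]
variable (G₁ : SimpleGraph V₁) (G₂ : SimpleGraph V₂) (v₁ : V₁) (v₂ : V₂)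

/-- Inclusion of `V₁` into the splice vertex set. -/
def jL : V₁ → {x : V₁ ⊕ V₂ // x ≠ Sum.inr v₂} := fun a => ⟨.inl a, by simp⟩

/-- Map of `V₂` into the splice vertex set, sending `v₂` to the identified
vertex. -/
def jR : V₂ → {x : V₁ ⊕ V₂ // x ≠ Sum.inr v₂} := fun b =>
  if h : b = v₂ then ⟨.inl v₁, by simp⟩ else ⟨.inr b, by simp [h]⟩

lemma jL_inj : Function.Injective (jL (V₁ := V₁) (V₂ := V₂) v₂) := by
  intro x y h
  simpa [jL, Subtype.mk.injEq] using h

lemma jR_inj : Function.Injective (jR (V₁ := V₁) (V₂ := V₂) v₁ v₂) := by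
  intro x y h
  by_cases hx : x = v₂ <;> by_cases hy : y = v₂ <;>
    simp_all [jR, Subtype.ext_iff]

lemma splice_nbhd_inl_ne (a : V₁) (ha : a ≠ v₁) :
    (graphSplice G₁ G₂ v₁ v₂).neighborSet ⟨.inl a, by simp⟩ =
      jL v₂ '' G₁.neighborSet a := by
  ext ⟨(x | x), hx⟩
  · simp [graphSplice, spliceAdj, jL, SimpleGraph.neighborSet, Subtype.ext_iff]
  · simp [graphSplice, spliceAdj, jL, SimpleGraph.neighborSet, Subtype.ext_iff, ha]

lemma splice_nbhd_inl_eq :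
    (graphSplice G₁ G₂ v₁ v₂).neighborSet ⟨.inl v₁, by simp⟩ =
      jL v₂ '' G₁.neighborSet v₁ ∪ jR v₁ v₂ '' G₂.neighborSet v₂ := by
  ext ⟨(x | x), hx⟩
  · constructor
    · intro h
      exact Or.inl ⟨x, h, rfl⟩
    · rintro (⟨b, hb, hbe⟩ | ⟨b, hb, hbe⟩)
      · obtain rfl : b = x := by simpa [jL, Subtype.mk.injEq] using hbe
        exact hb
      · have hbne : b ≠ v₂ := fun h => by subst h; exact G₂.loopless.irrefl _ hb
        simp [jR, hbne, Subtype.mk.injEq] at hbe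
  · constructor
    · intro h
      have h' : G₂.Adj v₂ x := h.2
      refine Or.inr ⟨x, h', ?_⟩
      have : x ≠ v₂ := by simpa using hx
      simp [jR, this]
    · rintro (⟨b, hb, hbe⟩ | ⟨b, hb, hbe⟩)
      · simp [jL, Subtype.mk.injEq] at hbe
      · have hbne : b ≠ v₂ := fun h => by subst h; exact G₂.loopless.irrefl _ hb
        obtain rfl : b = x := by simpa [jR, hbne, Subtype.mk.injEq] using hbe
        exact ⟨rfl, hb⟩

lemma splice_nbhd_inr (b : V₂) (hb : b ≠ v₂) :
    (graphSplice G₁ G₂ v₁ v₂).neighborSet ⟨.inr b, by simp [hb]⟩ =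
      jR v₁ v₂ '' G₂.neighborSet b := by
  ext ⟨(x | x), hx⟩
  · constructor
    · intro h
      obtain ⟨rfl, h2⟩ := (id h : x = v₁ ∧ G₂.Adj v₂ b)
      exact ⟨v₂, h2.symm, by simp [jR]⟩
    · rintro ⟨c, hc, hce⟩
      by_cases hcv : c = v₂
      · subst hcv
        obtain rfl : v₁ = x := by simpa [jR, Subtype.mk.injEq] using hce
        exact ⟨rfl, hc.symm⟩
      · simp [jR, hcv, Subtype.mk.injEq] at hce
  · constructor
    · intro h
      have h' : G₂.Adj b x := h
      have hxne : x ≠ v₂ := by simpa using hx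
      exact ⟨x, h', by simp [jR, hxne]⟩
    · rintro ⟨c, hc, hce⟩
      by_cases hcv : c = v₂
      · subst hcv
        simp [jR, Subtype.mk.injEq] at hce
      · obtain rfl : c = x := by simpa [jR, hcv, Subtype.mk.injEq] using hce
        exact hc

lemma deg_splice_inl_ne (a : V₁) (ha : a ≠ v₁) :
    degN (graphSplice G₁ G₂ v₁ v₂) ⟨.inl a, by simp⟩ = degN G₁ a := by
  rw [degN_eq_ncard, splice_nbhd_inl_ne G₁ G₂ v₁ v₂ a ha,
    Set.ncard_image_of_injective _ (jL_inj v₂), ← degN_eq_ncard]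

lemma deg_splice_inl_eq :
    degN (graphSplice G₁ G₂ v₁ v₂) ⟨.inl v₁, by simp⟩ = degN G₁ v₁ + degN G₂ v₂ := by
  rw [degN_eq_ncard, splice_nbhd_inl_eq]
  have hdisj : Disjoint (jL (V₁ := V₁) v₂ '' G₁.neighborSet v₁)
      (jR v₁ v₂ '' G₂.neighborSet v₂) := by
    rw [Set.disjoint_left]
    rintro x ⟨b, hb, rfl⟩ ⟨c, hc, hce⟩
    have hcne : c ≠ v₂ := fun h => by subst h; exact G₂.loopless.irrefl _ hc
    simp [jL, jR, hcne, Subtype.mk.injEq] at hce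
  rw [Set.ncard_union_eq hdisj,
    Set.ncard_image_of_injective _ (jL_inj v₂),
    Set.ncard_image_of_injective _ (jR_inj v₁ v₂), ← degN_eq_ncard, ← degN_eq_ncard]

lemma deg_splice_inr (b : V₂) (hb : b ≠ v₂) :
    degN (graphSplice G₁ G₂ v₁ v₂) ⟨.inr b, by simp [hb]⟩ = degN G₂ b := by
  rw [degN_eq_ncard, splice_nbhd_inr G₁ G₂ v₁ v₂ b hb,
    Set.ncard_image_of_injective _ (jR_inj v₁ v₂), ← degN_eq_ncard]

/-! Link neighbor sets -/

lemma link_nbhd_inl_ne (a : V₁) (ha : a ≠ v₁) :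
    (graphLink G₁ G₂ v₁ v₂).neighborSet (.inl a) =
      Sum.inl '' G₁.neighborSet a := by
  ext (x | x) <;>
    simp [graphLink, SimpleGraph.neighborSet, ha]

lemma link_nbhd_inl_eq :
    (graphLink G₁ G₂ v₁ v₂).neighborSet (.inl v₁) =
      Sum.inl '' G₁.neighborSet v₁ ∪ {Sum.inr v₂} := by
  ext (x | x) <;>
    simp [graphLink, SimpleGraph.neighborSet]

lemma link_nbhd_inr_ne (b : V₂) (hb : b ≠ v₂) :
    (graphLink G₁ G₂ v₁ v₂).neighborSet (.inr b) =
      Sum.inr '' G₂.neighborSet b := by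
  ext (x | x) <;>
    simp [graphLink, SimpleGraph.neighborSet, hb]

lemma link_nbhd_inr_eq :
    (graphLink G₁ G₂ v₁ v₂).neighborSet (.inr v₂) =
      Sum.inr '' G₂.neighborSet v₂ ∪ {Sum.inl v₁} := by
  ext (x | x) <;>
    simp [graphLink, SimpleGraph.neighborSet]

lemma deg_link_inl_ne (a : V₁) (ha : a ≠ v₁) :
    degN (graphLink G₁ G₂ v₁ v₂) (.inl a) = degN G₁ a := by
  rw [degN_eq_ncard, link_nbhd_inl_ne G₁ G₂ v₁ v₂ a ha,
    Set.ncard_image_of_injective _ Sum.inl_injective, ← degN_eq_ncard]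

lemma deg_link_inl_eq :
    degN (graphLink G₁ G₂ v₁ v₂) (.inl v₁) = degN G₁ v₁ + 1 := by
  rw [degN_eq_ncard, link_nbhd_inl_eq]
  have hdisj : Disjoint ((Sum.inl : V₁ → V₁ ⊕ V₂) '' G₁.neighborSet v₁)
      ({Sum.inr v₂} : Set (V₁ ⊕ V₂)) := by
    rw [Set.disjoint_left]
    rintro x ⟨b, hb, rfl⟩ hc
    simp at hc
  rw [Set.ncard_union_eq hdisj,
    Set.ncard_image_of_injective _ Sum.inl_injective, Set.ncard_singleton,
    ← degN_eq_ncard]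

lemma deg_link_inr_ne (b : V₂) (hb : b ≠ v₂) :
    degN (graphLink G₁ G₂ v₁ v₂) (.inr b) = degN G₂ b := by
  rw [degN_eq_ncard, link_nbhd_inr_ne G₁ G₂ v₁ v₂ b hb,
    Set.ncard_image_of_injective _ Sum.inr_injective, ← degN_eq_ncard]

lemma deg_link_inr_eq :
    degN (graphLink G₁ G₂ v₁ v₂) (.inr v₂) = degN G₂ v₂ + 1 := by
  rw [degN_eq_ncard, link_nbhd_inr_eq]
  have hdisj : Disjoint ((Sum.inr : V₂ → V₁ ⊕ V₂) '' G₂.neighborSet v₂)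
      ({Sum.inl v₁} : Set (V₁ ⊕ V₂)) := by
    rw [Set.disjoint_left]
    rintro x ⟨b, hb, rfl⟩ hc
    simp at hc
  rw [Set.ncard_union_eq hdisj,
    Set.ncard_image_of_injective _ Sum.inr_injective, Set.ncard_singleton,
    ← degN_eq_ncard]

end Aux

theorem Findex_splice_and_link {V₁ V₂ : Type*} [Fintype V₁] [Fintype V₂]
    [DecidableEq V₁] [DecidableEq V₂]
    (G₁ : SimpleGraph V₁) (G₂ : SimpleGraph V₂) (v₁ : V₁) (v₂ : V₂) :
    Findex (graphSplice G₁ G₂ v₁ v₂) =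
      Findex G₁ + Findex G₂
        + 3 * degN G₁ v₁ * degN G₂ v₂ * (degN G₁ v₁ + degN G₂ v₂) ∧
    Findex (graphLink G₁ G₂ v₁ v₂) =
      Findex G₁ + Findex G₂
        + 3 * (degN G₁ v₁ + degN G₂ v₂)
        + 3 * ((degN G₁ v₁) ^ 2 + (degN G₂ v₂) ^ 2) + 2 := by
  set p := degN G₁ v₁ with hp
  set q := degN G₂ v₂ with hq
  -- common pieces
  have hF₁ : Findex G₁ = p ^ 3 + ∑ a ∈ univ.erase v₁, (degN G₁ a) ^ 3 := by
    rw [Findex, ← Finset.add_sum_erase _ _ (mem_univ v₁)]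
  have hF₂ : Findex G₂ = q ^ 3 + ∑ b ∈ univ.erase v₂, (degN G₂ b) ^ 3 := by
    rw [Findex, ← Finset.add_sum_erase _ _ (mem_univ v₂)]
  constructor
  · -- splice
    set D : V₁ ⊕ V₂ → ℕ := fun x =>
      match x with
      | .inl a => if a = v₁ then p + q else degN G₁ a
      | .inr b => degN G₂ b with hD
    have key : ∀ x : {x : V₁ ⊕ V₂ // x ≠ Sum.inr v₂},
        degN (graphSplice G₁ G₂ v₁ v₂) x = D x.1 := by
      rintro ⟨(a | b), hx⟩
      · by_cases ha : a = v₁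
        · subst ha
          simpa [hD] using deg_splice_inl_eq G₁ G₂ a v₂
        · simpa [hD, ha] using deg_splice_inl_ne G₁ G₂ v₁ v₂ a ha
      · have hb : b ≠ v₂ := by simpa using hx
        simpa [hD] using deg_splice_inr G₁ G₂ v₁ v₂ b hb
    have h1 : Findex (graphSplice G₁ G₂ v₁ v₂) =
        ∑ x ∈ univ.erase (Sum.inr v₂), (D x) ^ 3 := by
      have hmem : ∀ x : V₁ ⊕ V₂, x ∈ univ.erase (Sum.inr v₂) ↔ x ≠ Sum.inr v₂ :=
        fun x => by simp
      rw [Findex, Finset.sum_subtype (univ.erase (Sum.inr v₂))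
        hmem (fun x => (D x) ^ 3)]
      exact Finset.sum_congr rfl fun x _ => by rw [key x]
    have h2 : Findex (graphSplice G₁ G₂ v₁ v₂) + (D (Sum.inr v₂)) ^ 3 =
        ∑ x, (D x) ^ 3 := by
      rw [h1, Finset.sum_erase_add _ _ (mem_univ _)]
    rw [Fintype.sum_sum_type] at h2
    have h3 : ∑ a : V₁, (D (Sum.inl a)) ^ 3 =
        (p + q) ^ 3 + ∑ a ∈ univ.erase v₁, (degN G₁ a) ^ 3 := by
      rw [← Finset.add_sum_erase _ (fun a => (D (Sum.inl a)) ^ 3) (mem_univ v₁)]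
      have e1 : D (Sum.inl v₁) = p + q := by simp [hD]
      rw [e1]
      congr 1
      exact Finset.sum_congr rfl fun a ha => by
        simp [hD, Finset.ne_of_mem_erase ha]
    have h4 : ∑ b : V₂, (D (Sum.inr b)) ^ 3 = Findex G₂ := by
      simp [hD, Findex]
    have h5 : D (Sum.inr v₂) = q := rfl
    rw [h3, h4, h5] at h2
    have h6 : Findex (graphSplice G₁ G₂ v₁ v₂) + q ^ 3 =
        (Findex G₁ + Findex G₂ + 3 * p * q * (p + q)) + q ^ 3 := by
      rw [h2, hF₁]; ring
    exact Nat.add_right_cancel h6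
  · -- link
    have h1 : Findex (graphLink G₁ G₂ v₁ v₂) =
        ∑ a : V₁, (degN (graphLink G₁ G₂ v₁ v₂) (Sum.inl a)) ^ 3 +
        ∑ b : V₂, (degN (graphLink G₁ G₂ v₁ v₂) (Sum.inr b)) ^ 3 := by
      rw [Findex, Fintype.sum_sum_type]
    have h3 : ∑ a : V₁, (degN (graphLink G₁ G₂ v₁ v₂) (Sum.inl a)) ^ 3 =
        (p + 1) ^ 3 + ∑ a ∈ univ.erase v₁, (degN G₁ a) ^ 3 := by
      rw [← Finset.add_sum_erase _ _ (mem_univ v₁), deg_link_inl_eq]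
      congr 1
      exact Finset.sum_congr rfl fun a ha => by
        rw [deg_link_inl_ne G₁ G₂ v₁ v₂ a (Finset.ne_of_mem_erase ha)]
    have h4 : ∑ b : V₂, (degN (graphLink G₁ G₂ v₁ v₂) (Sum.inr b)) ^ 3 =
        (q + 1) ^ 3 + ∑ b ∈ univ.erase v₂, (degN G₂ b) ^ 3 := by
      rw [← Finset.add_sum_erase _ _ (mem_univ v₂), deg_link_inr_eq]
      congr 1
      exact Finset.sum_congr rfl fun b hb => by
        rw [deg_link_inr_ne G₁ G₂ v₁ v₂ b (Finset.ne_of_mem_erase hb)]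
    rw [h1, h3, h4, hF₁, hF₂]
    ring
end
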